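/- For all real λ ≥ 0, t ∈ ℝ and y ∈ (0, 1], one has |(√(t + iy − λ) − Re √(i − λ)) / Im √(i − λ)| ≤ 2·(1 + t²)^{1/4}. -/

import Mathlib

set_option maxHeartbeats 1000000

open Complex

lemma re_sqrt_nonneg (x : ℂ) : 0 ≤ (x ^ ((1:ℂ)/2)).re := by
  have h : ((1:ℂ)/2) = ((1/2 : ℝ) : ℂ) := by norm_num
  rw [h, Complex.cpow_ofReal_re]
  apply mul_nonneg (Real.rpow_nonneg (norm_nonneg x) _)
  apply Real.cos_nonneg_of_mem_Icc
  constructor <;> nlinarith [Complex.arg_le_pi x, Complex.neg_pi_lt_arg x, Real.pi_pos]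

/-- For all real `λ ≥ 0`, `t ∈ ℝ` and `y ∈ (0, 1]`, one has
`|(√(t + iy − λ) − Re √(i − λ)) / Im √(i − λ)| ≤ 2 (1 + t²)^{1/4}`, where `√` denotes the
principal branch of the complex square root. -/
theorem stmt10 (l t y : ℝ) (hl : 0 ≤ l) (hy : y ∈ Set.Ioc (0 : ℝ) 1) :
    ‖(((t : ℂ) + Complex.I * y - l) ^ ((1 : ℂ) / 2)
          - (((Complex.I - (l : ℂ)) ^ ((1 : ℂ) / 2)).re : ℂ))
        / ((((Complex.I - (l : ℂ)) ^ ((1 : ℂ) / 2)).im : ℂ))‖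
      ≤ 2 * (1 + t ^ 2) ^ ((1 : ℝ) / 4) := by
  obtain ⟨hy0, hy1⟩ := hy
  set z : ℂ := (t : ℂ) + Complex.I * y - l with hzdef
  set s : ℂ := z ^ ((1:ℂ)/2) with hsdef
  set w : ℂ := (Complex.I - (l:ℂ)) ^ ((1:ℂ)/2) with hwdef
  set A : ℝ := (1 + t ^ 2) ^ ((1:ℝ)/4) with hAdef
  have hhalf : ((1:ℂ)/2) = (((2:ℕ):ℂ))⁻¹ := by norm_num
  have hs2 : s ^ 2 = z := by
    rw [hsdef, hhalf]; exact Complex.cpow_nat_inv_pow z two_ne_zero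
  have hw2 : w ^ 2 = Complex.I - (l:ℂ) := by
    rw [hwdef, hhalf]; exact Complex.cpow_nat_inv_pow _ two_ne_zero
  have hp : 0 ≤ s.re := re_sqrt_nonneg z
  have haw : 0 ≤ w.re := re_sqrt_nonneg _
  -- real/imag parts of w² = i − l
  have h1 : w.re ^ 2 - w.im ^ 2 = -l := by
    have := congrArg Complex.re hw2
    simp [pow_two, Complex.mul_re] at this
    nlinarith [this]
  have h2 : 2 * (w.re * w.im) = 1 := by
    have := congrArg Complex.im hw2
    simp [pow_two, Complex.mul_im] at this
    nlinarith [this]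
  have ha : 0 < w.re := by
    rcases haw.lt_or_eq with h | h
    · exact h
    · exfalso; rw [← h] at h2; simp at h2
  have hb : 0 < w.im := by nlinarith [h2, ha]
  have hbl : w.im ^ 2 = w.re ^ 2 + l := by linarith
  have h4 : 4 * w.re ^ 2 * (w.re ^ 2 + l) = 1 := by nlinarith [h2, hbl]
  have ha2 : w.re ^ 2 ≤ 1/2 := by
    nlinarith [h4, mul_nonneg (mul_nonneg (by norm_num : (0:ℝ) ≤ 4) (sq_nonneg w.re)) hl]
  have h2ab : 1 ≤ 2 * w.re ^ 2 + l := by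
    nlinarith [h4, sq_nonneg (2 * w.re ^ 2 - 1), mul_pos ha ha]
  -- |z| facts
  have habs : ‖z‖ = s.re ^ 2 + s.im ^ 2 := by
    have h5 : ‖z‖ = ‖s‖ ^ 2 := by
      rw [← hs2, norm_pow]
    rw [h5, Complex.sq_norm, Complex.normSq_apply]; ring
  have hzre : z.re = t - l := by simp [hzdef]
  have hzim : z.im = y := by simp [hzdef]
  have hzsq : ‖z‖ ^ 2 = (t - l) ^ 2 + y ^ 2 := by
    rw [Complex.sq_norm, Complex.normSq_apply, hzre, hzim]; ring
  have hzb : ‖z‖ ≤ |t| + l + 1 := by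
    nlinarith [hzsq, norm_nonneg z, abs_nonneg t, _root_.sq_abs t, neg_abs_le t,
      le_abs_self t, mul_nonneg (abs_nonneg t) hl]
  -- A facts
  have h1t : (0:ℝ) ≤ 1 + t ^ 2 := by positivity
  have hA0 : 0 < A := Real.rpow_pos_of_pos (by positivity) _
  have hA4 : A ^ 4 = 1 + t ^ 2 := by
    rw [hAdef, ← Real.rpow_natCast ((1 + t ^ 2) ^ ((1:ℝ)/4)) 4, ← Real.rpow_mul h1t]
    norm_num
  have hA1 : 1 ≤ A ^ 2 := by nlinarith [hA4, sq_nonneg t, mul_pos hA0 hA0]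
  have htA : |t| + 3/2 ≤ 2 * A ^ 2 := by
    nlinarith [hA4, sq_nonneg (|t| - 1/2), _root_.sq_abs t, abs_nonneg t, mul_pos hA0 hA0]
  -- main bound on squares
  have hsub : ‖s - (w.re : ℂ)‖ ^ 2 = (s.re - w.re) ^ 2 + s.im ^ 2 := by
    rw [Complex.sq_norm, Complex.normSq_apply]; simp; ring
  have main : (s.re - w.re) ^ 2 + s.im ^ 2 ≤ (2 * A * w.im) ^ 2 := by
    have hint1 : 0 ≤ A ^ 2 * (2 * w.re ^ 2 + l - 1) :=
      mul_nonneg (sq_nonneg A) (by linarith)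
    have hint2 : 0 ≤ l * (A ^ 2 - 1) := mul_nonneg hl (by linarith)
    nlinarith [hint1, hint2, habs, hzb, ha2, h2ab, htA, hl,
      mul_nonneg hp haw, hbl]
  -- finish
  have hgoal : ‖s - (w.re : ℂ)‖ ≤ 2 * A * w.im := by
    nlinarith [main, hsub, norm_nonneg (s - (w.re : ℂ)),
      mul_pos (mul_pos (by norm_num : (0:ℝ) < 2) hA0) hb]
  rw [norm_div, Complex.norm_real, Real.norm_eq_abs, abs_of_pos hb, div_le_iff₀ hb]
  linarith [hgoal]
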